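/- Let A and B be admissible linear chains with e(B) = 1 − e(Aᵀ), i.e. B = A*. Then d(A) = d(B) and d(A) = d(B̅) + d(A̲). -/

import Mathlib

/-- The tridiagonal matrix associated to a linear chain `A = [a₁,…,a_r]`:
diagonal entries `aᵢ`, entries `-1` immediately above/below the diagonal, `0` elsewhere. -/
def chainMatrix (A : List ℤ) : Matrix (Fin A.length) (Fin A.length) ℤ :=
  fun i j =>
    if i = j then A.get i
    else if (i : ℕ) + 1 = (j : ℕ) ∨ (j : ℕ) + 1 = (i : ℕ) then -1 else 0

/-- The discriminant `d(A)` of a linear chain: the determinant of `chainMatrix A`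
(the `0 × 0` determinant being `1` for the empty list). -/
def disc (A : List ℤ) : ℤ := (chainMatrix A).det

/-- A linear chain is admissible if it is nonempty and all of its entries are `≥ 2`. -/
def Admissible (A : List ℤ) : Prop := A ≠ [] ∧ ∀ a ∈ A, 2 ≤ a

/-- The inductance `e(A) = d(A̅)/d(A)` of a linear chain, as a rational number. -/
def inductance (A : List ℤ) : ℚ := (disc A.tail : ℚ) / (disc A : ℚ)

lemma chainMatrix_succ_succ (a : ℤ) (A : List ℤ) (i j : Fin A.length) :
    chainMatrix (a :: A) i.succ j.succ = chainMatrix A i j := by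
  simp only [chainMatrix, Fin.succ_inj, Fin.val_succ, add_left_inj]
  rfl

lemma disc_nil : disc [] = 1 := by
  simp [disc, Matrix.det_fin_zero]

lemma disc_singleton (a : ℤ) : disc [a] = a := by
  simp [disc, Matrix.det_fin_one, chainMatrix]

lemma disc_cons (a b : ℤ) (C : List ℤ) :
    disc (a :: b :: C) = a * disc (b :: C) - disc C := by
  have key : ∀ (M : Matrix (Fin (C.length + 1 + 1)) (Fin (C.length + 1 + 1)) ℤ),
      M = chainMatrix (a :: b :: C) → M.det = a * disc (b :: C) - disc C := by
    intro M hM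
    rw [Matrix.det_succ_row_zero, Fin.sum_univ_succ, Fin.sum_univ_succ]
    have hz : ∀ i : Fin C.length, M 0 i.succ.succ = 0 := by
      intro i
      rw [hM, chainMatrix, if_neg, if_neg]
      · simp only [Fin.val_succ, Fin.val_zero]; omega
      · intro h; have := congrArg Fin.val h; simp [Fin.val_succ] at this
    simp only [hz, mul_zero, zero_mul, Finset.sum_const_zero, add_zero]
    have h00 : M 0 0 = a := by rw [hM]; rfl
    have h01 : M 0 (Fin.succ 0) = -1 := by
      rw [hM, chainMatrix, if_neg, if_pos]
      · left; rfl
      · intro h; have := congrArg Fin.val h; simp at this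
    have hm1 : (M.submatrix Fin.succ ((0 : Fin (C.length+1+1)).succAbove)).det = disc (b :: C) := by
      rw [Fin.succAbove_zero]
      congr 1
      ext i j
      rw [Matrix.submatrix_apply, hM]
      exact chainMatrix_succ_succ a (b :: C) i j
    have hm2 : (M.submatrix Fin.succ ((Fin.succ 0 : Fin (C.length+1+1)).succAbove)).det = -disc C := by
      rw [Matrix.det_succ_column_zero, Fin.sum_univ_succ]
      have hz2 : ∀ i : Fin C.length,
          (M.submatrix Fin.succ ((Fin.succ 0 : Fin (C.length+1+1)).succAbove)) i.succ 0 = 0 := by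
        intro i
        rw [Matrix.submatrix_apply, hM, chainMatrix, if_neg, if_neg]
        · have h1 : ((Fin.succ 0 : Fin (C.length+1+1)).succAbove 0 : ℕ) = 0 := rfl
          rw [h1]; simp only [Fin.val_succ, Fin.val_zero]; omega
        · intro h; have := congrArg Fin.val h; simp [Fin.val_succ] at this
      simp only [hz2, mul_zero, zero_mul, Finset.sum_const_zero, add_zero]
      have hN0 : (M.submatrix Fin.succ ((Fin.succ 0 : Fin (C.length+1+1)).succAbove)) 0 0 = -1 := by
        rw [Matrix.submatrix_apply, hM, chainMatrix, if_neg, if_pos]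
        · right; rfl
        · intro h; have := congrArg Fin.val h; simp at this
      have hNm : ((M.submatrix Fin.succ ((Fin.succ 0 : Fin (C.length+1+1)).succAbove)).submatrix
          (Fin.succAbove 0) Fin.succ).det = disc C := by
        congr 1
        ext i j
        simp only [Matrix.submatrix_apply, Fin.succAbove_zero]
        have hcol : (Fin.succ 0 : Fin (C.length+1+1)).succAbove j.succ = j.succ.succ := by
          rw [Fin.succAbove]
          rw [if_neg]
          simp [Fin.lt_def]
        rw [hcol, hM, chainMatrix_succ_succ, chainMatrix_succ_succ]
      rw [hN0, hNm]
      simp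
    rw [h00, h01, hm1, hm2]
    simp [Fin.val_succ]
    ring
  exact key _ rfl

lemma disc_reverse (A : List ℤ) : disc A.reverse = disc A := by
  have hlen : A.reverse.length = A.length := List.length_reverse
  let e : Fin A.reverse.length ≃ Fin A.length := (finCongr hlen).trans (Fin.revPerm)
  have hMat : chainMatrix A.reverse = (chainMatrix A).submatrix e e := by
    ext i j
    simp only [Matrix.submatrix_apply, chainMatrix]
    have hei : ((e i : Fin A.length) : ℕ) = A.length - 1 - (i : ℕ) := by
      simp [e, Fin.revPerm, Fin.rev]; omega
    have hej : ((e j : Fin A.length) : ℕ) = A.length - 1 - (j : ℕ) := by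
      simp [e, Fin.revPerm, Fin.rev]; omega
    have hi : (i : ℕ) < A.length := by omega
    have hj : (j : ℕ) < A.length := by omega
    by_cases h : i = j
    · subst h
      rw [if_pos rfl, if_pos rfl]
      show A.reverse.get i = A.get (e i)
      rw [List.get_eq_getElem, List.get_eq_getElem, List.getElem_reverse]
      congr 1
      rw [hei]
    · rw [if_neg h, if_neg (fun hc => h (e.injective hc))]
      have hiff : ((i:ℕ) + 1 = (j:ℕ) ∨ (j:ℕ) + 1 = (i:ℕ)) ↔
          (((e i):ℕ) + 1 = ((e j):ℕ) ∨ ((e j):ℕ) + 1 = ((e i):ℕ)) := by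
        rw [hei, hej]
        constructor
        · rintro (h1 | h1)
          · right; omega
          · left; omega
        · rintro (h1 | h1)
          · right; omega
          · left; omega
      exact if_congr hiff rfl rfl
  rw [disc, hMat, Matrix.det_submatrix_equiv_self, disc]

lemma disc_pos_aux : ∀ A : List ℤ, (∀ a ∈ A, 2 ≤ a) →
    1 ≤ disc A ∧ (A ≠ [] → disc A.tail < disc A) := by
  intro A
  induction A with
  | nil => intro _; simp [disc_nil]
  | cons a A ih =>
    intro h
    have ha : 2 ≤ a := h a List.mem_cons_self
    match A with
    | [] =>
      refine ⟨by rw [disc_singleton]; omega, fun _ => ?_⟩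
      simp only [List.tail_cons, disc_nil, disc_singleton]; omega
    | b :: C =>
      have hh : ∀ x ∈ b :: C, 2 ≤ x := fun x hx => h x (List.mem_cons_of_mem a hx)
      obtain ⟨h1, h2⟩ := ih hh
      have h2' := h2 (List.cons_ne_nil b C)
      simp only [List.tail_cons] at h2' ⊢
      rw [disc_cons]
      constructor
      · nlinarith
      · intro _; nlinarith

lemma disc_coprime : ∀ A : List ℤ, IsCoprime (disc A) (disc A.tail) := by
  intro A
  induction A with
  | nil => simp [disc_nil]; exact isCoprime_one_left
  | cons a A ih =>
    match A with
    | [] => simp only [List.tail_cons, disc_nil]; exact isCoprime_one_right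
    | b :: C =>
      simp only [List.tail_cons] at ih ⊢
      rw [disc_cons]
      have h1 : IsCoprime (-disc C) (disc (b :: C)) := ih.symm.neg_left
      have h2 := h1.add_mul_left_left a
      have : -disc C + disc (b :: C) * a = a * disc (b :: C) - disc C := by ring
      rwa [this] at h2

/-- Lemma 2.2 (ii): if `B = A*` (i.e. `e(B) = 1 − e(Aᵀ)`), then
`d(A) = d(A*)` and `d(A) = d(A̅*) + d(A̲)`. -/
theorem disc_adjoint (A B : List ℤ) (hA : Admissible A) (hB : Admissible B)
    (hAB : inductance B = 1 - inductance A.reverse) :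
    disc A = disc B ∧ disc A = disc B.tail + disc A.dropLast := by
  obtain ⟨hAne, hA2⟩ := hA
  obtain ⟨hBne, hB2⟩ := hB
  set x := disc A with hxdef
  set y := disc A.dropLast with hydef
  set u := disc B with hudef
  set v := disc B.tail with hvdef
  have hArev : disc A.reverse = x := disc_reverse A
  have hArevt : disc A.reverse.tail = y := by
    rw [List.tail_reverse, disc_reverse]
  -- positivity facts
  have hA2' : ∀ a ∈ A.reverse, 2 ≤ a := fun a haa => hA2 a (List.mem_reverse.mp haa)
  have hArevne : A.reverse ≠ [] := fun hc => hAne (by simpa using congrArg List.reverse hc)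
  obtain ⟨hx1, hyx'⟩ := disc_pos_aux A.reverse hA2'
  rw [hArev] at hx1
  have hyx : y < x := by have := hyx' hArevne; rwa [hArev, hArevt] at this
  have hy1 : 1 ≤ y := (disc_pos_aux A.dropLast
    (fun a haa => hA2 a (List.dropLast_subset A haa))).1
  obtain ⟨hu1, hvu'⟩ := disc_pos_aux B hB2
  have hvu : v < u := hvu' hBne
  have hv1 : 1 ≤ v := (disc_pos_aux B.tail
    (fun a haa => hB2 a (List.tail_subset B haa))).1
  -- coprimality facts
  have hcopB : IsCoprime u v := disc_coprime B
  have hcopA : IsCoprime x y := by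
    have := disc_coprime A.reverse
    rwa [hArev, hArevt] at this
  have hcopA' : IsCoprime x (x - y) := by
    have h1 := (hcopA.neg_right).add_mul_left_right 1
    have h2 : -y + x * 1 = x - y := by ring
    rwa [h2] at h1
  -- the cross-multiplication identity
  have hxQ : (x : ℚ) ≠ 0 := by exact_mod_cast (by omega : x ≠ 0)
  have huQ : (u : ℚ) ≠ 0 := by exact_mod_cast (by omega : u ≠ 0)
  have hcross : v * x = (x - y) * u := by
    have h := hAB
    rw [inductance, inductance, hArev, hArevt, ← hudef, ← hvdef] at h
    have hQ : (v : ℚ) * x = ((x : ℚ) - y) * u := by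
      field_simp at h
      linarith [h]
    exact_mod_cast hQ
  -- mutual divisibility gives disc A = disc B
  have hux : u ∣ x := by
    have hdvd : u ∣ v * x := ⟨x - y, by linarith [hcross]⟩
    exact hcopB.dvd_of_dvd_mul_left hdvd
  have hxu : x ∣ u := by
    have hdvd : x ∣ (x - y) * u := ⟨v, by linarith [hcross]⟩
    exact hcopA'.dvd_of_dvd_mul_left hdvd
  have hxequ : x = u := Int.dvd_antisymm (by omega) (by omega) hxu hux
  constructor
  · exact hxequ
  · -- cancel x from v * x = (x - y) * x
    have : v * x = (x - y) * x := by rw [hcross, hxequ]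
    have hveq : v = x - y := by
      have hxne : x ≠ 0 := by omega
      exact mul_right_cancel₀ hxne this
    omega
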